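/- f(10) = 15, witnessed by the Petersen graph: the Petersen graph has 10 vertices, 15 edges, and contains no 3-cycle or 4-cycle, and no 10-vertex graph with no 3- or 4-cycles has more than 15 edges. -/

import Mathlib

open Finset

open scoped Classical

noncomputable def edgeCount {V : Type} [Fintype V] (G : SimpleGraph V) : ℕ :=
  G.edgeFinset.card

noncomputable def triCount {V : Type} [Fintype V] [DecidableEq V] (G : SimpleGraph V) : ℕ :=
  (G.cliqueFinset 3).card

noncomputable def sqCount {V : Type} [Fintype V] [DecidableEq V] (G : SimpleGraph V) : ℕ :=
  ((univ : Finset (V × V × V × V)).filter fun p =>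
    p.1 ≠ p.2.1 ∧ p.1 ≠ p.2.2.1 ∧ p.1 ≠ p.2.2.2 ∧ p.2.1 ≠ p.2.2.1 ∧ p.2.1 ≠ p.2.2.2 ∧
      p.2.2.1 ≠ p.2.2.2 ∧ G.Adj p.1 p.2.1 ∧ G.Adj p.2.1 p.2.2.1 ∧ G.Adj p.2.2.1 p.2.2.2 ∧
      G.Adj p.2.2.2 p.1).card / 8

noncomputable def score {V : Type} [Fintype V] [DecidableEq V] (G : SimpleGraph V) : ℤ :=
  (edgeCount G : ℤ) - (triCount G : ℤ) - (sqCount G : ℤ)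

def noC3 {V : Type} (G : SimpleGraph V) : Prop := G.CliqueFree 3

def noC4 {V : Type} (G : SimpleGraph V) : Prop :=
  ∀ a b c d : V, a ≠ b → a ≠ c → a ≠ d → b ≠ c → b ≠ d → c ≠ d →
    G.Adj a b → G.Adj b c → G.Adj c d → ¬ G.Adj d a

noncomputable def extremalNum (n : ℕ) : ℕ :=
  ((univ : Finset (SimpleGraph (Fin n))).filter fun G => noC3 G ∧ noC4 G).sup edgeCount

noncomputable def gflip {V : Type} [DecidableEq V] (G : SimpleGraph V) (u v : V) : SimpleGraph V :=
  SimpleGraph.fromEdgeSet (symmDiff G.edgeSet {s(u, v)})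

noncomputable def petersen : SimpleGraph {s : Finset (Fin 5) // s.card = 2} :=
  SimpleGraph.fromRel (fun a b => Disjoint a.1 b.1)

/-! ### Auxiliary lemmas -/

lemma my_no_triangle {V : Type} [DecidableEq V] {G : SimpleGraph V} (h3 : G.CliqueFree 3) :
    ∀ a b c : V, G.Adj a b → G.Adj a c → G.Adj b c → False := by
  intro a b c hab hac hbc
  exact h3 {a, b, c} (SimpleGraph.is3Clique_iff.mpr ⟨a, b, c, hab, hac, hbc, rfl⟩)

lemma my_key_bound {V : Type} [Fintype V] [DecidableEq V] (hV : Fintype.card V = 10)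
    (G : SimpleGraph V) [DecidableRel G.Adj] (h3 : G.CliqueFree 3) (h4 : noC4 G) :
    G.edgeFinset.card ≤ 15 := by
  set d : V → ℕ := fun v => G.degree v with hd
  -- Step 1: sum of degrees over a neighborhood is at most 9
  have step1 : ∀ v : V, ∑ u ∈ G.neighborFinset v, d u ≤ 9 := by
    intro v
    set N := G.neighborFinset v with hN
    set S := N.sigma (fun u => (G.neighborFinset u).erase v) with hS
    have hmemS : ∀ p : (_ : V) × V, p ∈ S ↔
        G.Adj v p.1 ∧ G.Adj p.1 p.2 ∧ p.2 ≠ v := by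
      intro p
      simp only [hS, Finset.mem_sigma, hN, SimpleGraph.mem_neighborFinset, Finset.mem_erase]
      tauto
    have hcardS : S.card = ∑ u ∈ N, (d u - 1) := by
      rw [hS, Finset.card_sigma]
      refine Finset.sum_congr rfl fun u hu => ?_
      rw [Finset.card_erase_of_mem]
      · rfl
      · rw [SimpleGraph.mem_neighborFinset]
        exact ((hN ▸ SimpleGraph.mem_neighborFinset ..).mp hu).symm
    have hinj : Set.InjOn (fun p : (_ : V) × V => p.2) S := by
      intro p hp q hq hpq
      simp only [Finset.mem_coe, hmemS] at hp hq
      obtain ⟨hvp, hp12, hp2v⟩ := hp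
      obtain ⟨hvq, hq12, hq2v⟩ := hq
      simp only at hpq
      rcases eq_or_ne p.1 q.1 with h | h
      · exact Sigma.ext h (by rw [hpq])
      · exfalso
        have hadj : G.Adj p.2 q.1 := by
          have : G.Adj q.2 q.1 := hq12.symm
          rwa [← hpq] at this
        exact h4 v p.1 p.2 q.1 hvp.ne (Ne.symm hp2v) hvq.ne hp12.ne h hadj.ne hvp hp12 hadj hvq.symm
    have hmaps : ∀ p ∈ S, (fun p : (_ : V) × V => p.2) p ∈ Finset.univ \ insert v N := by
      intro p hp
      rw [hmemS] at hp
      obtain ⟨hvp, hp12, hp2v⟩ := hp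
      simp only [Finset.mem_sdiff, Finset.mem_univ, true_and, Finset.mem_insert, hN,
        SimpleGraph.mem_neighborFinset]
      push_neg
      exact ⟨hp2v, fun hadj => my_no_triangle h3 v p.1 p.2 hvp hadj hp12⟩
    have hle : S.card ≤ (Finset.univ \ insert v N).card :=
      Finset.card_le_card_of_injOn _ hmaps hinj
    have hvN : v ∉ N := by simp [hN]
    have hcard_ins : (insert v N).card = d v + 1 := by
      rw [Finset.card_insert_of_notMem hvN]; rfl
    have hcard_sdiff : (Finset.univ \ insert v N).card = 10 - (d v + 1) := by
      rw [Finset.card_sdiff_of_subset (Finset.subset_univ _), Finset.card_univ, hV, hcard_ins]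
    have hins_le : d v + 1 ≤ 10 := by
      rw [← hcard_ins, ← hV, ← Finset.card_univ]
      exact Finset.card_le_card (Finset.subset_univ _)
    have hsum_eq : ∑ u ∈ N, d u = S.card + d v := by
      have hdu : ∀ u ∈ N, d u = (d u - 1) + 1 := by
        intro u hu
        have : 0 < d u := by
          show 0 < G.degree u
          rw [← SimpleGraph.card_neighborFinset_eq_degree, Finset.card_pos]
          exact ⟨v, (SimpleGraph.mem_neighborFinset ..).mpr
            ((hN ▸ SimpleGraph.mem_neighborFinset ..).mp hu).symm⟩
        omega
      rw [Finset.sum_congr rfl hdu, Finset.sum_add_distrib, Finset.sum_const, hcardS,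
        smul_eq_mul, mul_one]
      congr 1
    omega
  -- Step 2
  have step2 : ∑ v : V, d v * d v ≤ 90 := by
    have hswap : ∀ v : V, ∑ u ∈ G.neighborFinset v, d u
        = ∑ u : V, if G.Adj v u then d u else 0 := by
      intro v
      rw [SimpleGraph.neighborFinset_eq_filter, Finset.sum_filter]
    have h1 : ∑ v : V, ∑ u ∈ G.neighborFinset v, d u = ∑ u : V, d u * d u :=
      calc ∑ v : V, ∑ u ∈ G.neighborFinset v, d u
          = ∑ v : V, ∑ u : V, if G.Adj v u then d u else 0 :=
            Finset.sum_congr rfl fun v _ => hswap v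
        _ = ∑ u : V, ∑ v : V, if G.Adj v u then d u else 0 := Finset.sum_comm
        _ = ∑ u : V, d u * d u := Finset.sum_congr rfl fun u _ => by
            rw [← Finset.sum_filter]
            have hfil : Finset.univ.filter (fun v => G.Adj v u) = G.neighborFinset u := by
              rw [SimpleGraph.neighborFinset_eq_filter]
              exact Finset.filter_congr fun v _ => by rw [SimpleGraph.adj_comm]
            rw [hfil, Finset.sum_const, SimpleGraph.card_neighborFinset_eq_degree, smul_eq_mul]
    calc ∑ u : V, d u * d u = ∑ v : V, ∑ u ∈ G.neighborFinset v, d u := h1.symm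
      _ ≤ ∑ _v : V, 9 := Finset.sum_le_sum fun v _ => step1 v
      _ = 90 := by rw [Finset.sum_const, Finset.card_univ, hV]; rfl
  -- Step 3
  have step3 : ∑ v : V, d v ≤ 30 := by
    by_contra hcon
    push_neg at hcon
    have h1 : (∑ v : V, d v) ^ 2 ≤ (Finset.univ.card : ℕ) * ∑ v : V, (d v) ^ 2 :=
      sq_sum_le_card_mul_sum_sq
    simp_rw [pow_two] at h1
    rw [Finset.card_univ, hV] at h1
    have h2 : (∑ v : V, d v) * (∑ v : V, d v) ≤ 900 :=
      h1.trans (by exact Nat.mul_le_mul_left 10 step2)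
    have h3' : 31 * 31 ≤ (∑ v : V, d v) * (∑ v : V, d v) :=
      Nat.mul_le_mul hcon hcon
    omega
  have hhand : ∑ v : V, d v = 2 * G.edgeFinset.card :=
    SimpleGraph.sum_degrees_eq_twice_card_edges G
  omega

lemma my_edgeCount_eq {V : Type} [Fintype V] (G : SimpleGraph V) (F : Fintype G.edgeSet) :
    edgeCount G = (@SimpleGraph.edgeFinset V G F).card := by
  unfold edgeCount
  have h : ∀ (F1 F2 : Fintype G.edgeSet),
      (@SimpleGraph.edgeFinset V G F1).card = (@SimpleGraph.edgeFinset V G F2).card := by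
    intro F1 F2; rw [Subsingleton.elim F1 F2]
  exact h _ _

set_option linter.constructorNameAsVariable false
set_option linter.unusedVariables false

instance my_petersen_adj_dec : DecidableRel petersen.Adj := fun a b =>
  decidable_of_iff _ (SimpleGraph.fromRel_adj _ a b).symm

theorem stmt_13 :
    Fintype.card {s : Finset (Fin 5) // s.card = 2} = 10 ∧
    edgeCount petersen = 15 ∧ noC3 petersen ∧ noC4 petersen ∧
    extremalNum 10 = 15 := by
  have hcard : Fintype.card {s : Finset (Fin 5) // s.card = 2} = 10 := by decide
  have htri : ∀ a b c : {s : Finset (Fin 5) // s.card = 2},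
      petersen.Adj a b → petersen.Adj a c → petersen.Adj b c → False := by decide
  have hnoC3 : noC3 petersen := by
    intro s hs
    rw [SimpleGraph.is3Clique_iff] at hs
    obtain ⟨a, b, c, hab, hac, hbc, -⟩ := hs
    exact htri a b c hab hac hbc
  have hnoC4 : noC4 petersen := by
    unfold noC4
    set_option synthInstance.maxSize 400 in
    set_option maxHeartbeats 1000000 in
    decide
  have hedge : edgeCount petersen = 15 := by
    rw [my_edgeCount_eq petersen (SimpleGraph.fintypeEdgeSet petersen)]
    have h2 : 2 * petersen.edgeFinset.card
        = (Finset.univ.filter fun (x : _ × _) => petersen.Adj x.1 x.2).card :=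
      SimpleGraph.two_mul_card_edgeFinset petersen
    have h30 : (Finset.univ.filter fun (x : _ × _) => petersen.Adj x.1 x.2).card = 30 := by
      set_option maxHeartbeats 1000000 in decide
    omega
  refine ⟨hcard, hedge, hnoC3, hnoC4, ?_⟩
  apply le_antisymm
  · unfold extremalNum
    apply Finset.sup_le
    intro G hG
    simp only [Finset.mem_filter] at hG
    obtain ⟨-, h3, h4⟩ := hG
    have := my_key_bound (V := Fin 10) (by simp) G h3 h4
    rwa [my_edgeCount_eq G _]
  · -- lower bound via the Petersen graph transported to `Fin 10`
    have e : Fin 10 ≃ {s : Finset (Fin 5) // s.card = 2} :=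
      Fintype.equivOfCardEq (by rw [Fintype.card_fin, hcard])
    set G₀ : SimpleGraph (Fin 10) := petersen.comap e.toEmbedding with hG₀
    have iso : G₀ ≃g petersen := SimpleGraph.Iso.comap e petersen
    have hG3 : noC3 G₀ := hnoC3.comap iso.isContained
    have hG4 : noC4 G₀ := by
      intro a b c d hab hac had hbc hbd hcd h1 h2 h3
      exact hnoC4 (e a) (e b) (e c) (e d)
        (fun h => hab (e.injective h)) (fun h => hac (e.injective h))
        (fun h => had (e.injective h)) (fun h => hbc (e.injective h))
        (fun h => hbd (e.injective h)) (fun h => hcd (e.injective h))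
        h1 h2 h3
    have hcnt : edgeCount G₀ = 15 := by
      rw [my_edgeCount_eq G₀ (SimpleGraph.fintypeEdgeSet G₀), ← hedge,
        my_edgeCount_eq petersen (SimpleGraph.fintypeEdgeSet petersen)]
      exact SimpleGraph.Iso.card_edgeFinset_eq iso
    unfold extremalNum
    rw [← hcnt]
    apply Finset.le_sup
    simp only [Finset.mem_filter, Finset.mem_univ, true_and]
    exact ⟨hG3, hG4⟩
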